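/- If G is a claw-free graph (no induced K_{1,3}), then the independence number of G is at most twice its domination number: α(G) ≤ 2γ(G). -/
import Mathlib


open Finset

variable {V : Type*}

/-- A finset is independent in `G` : no two of its vertices are adjacent. -/
def IsIndepFinset (G : SimpleGraph V) (S : Finset V) : Prop :=
  ∀ u ∈ S, ∀ v ∈ S, ¬ G.Adj u v

/-- A finset dominates `G` : every vertex outside it has a neighbour inside it. -/
def IsDomFinset (G : SimpleGraph V) (D : Finset V) : Prop :=
  ∀ v, v ∉ D → ∃ u ∈ D, G.Adj u v

/-- The independence number of `G`. -/
noncomputable def indepNum [Fintype V] (G : SimpleGraph V) : ℕ :=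
  sSup {n | ∃ S : Finset V, IsIndepFinset G S ∧ S.card = n}

/-- The domination number of `G`. -/
noncomputable def domNum [Fintype V] (G : SimpleGraph V) : ℕ :=
  sInf {n | ∃ D : Finset V, IsDomFinset G D ∧ D.card = n}

/-- `G` is `K_{1,r}`-free: no vertex has `r` pairwise nonadjacent neighbours. -/
def K1rFree (G : SimpleGraph V) (r : ℕ) : Prop :=
  ¬ ∃ (v : V) (A : Finset V), (∀ a ∈ A, G.Adj v a) ∧
      (∀ a ∈ A, ∀ b ∈ A, a ≠ b → ¬ G.Adj a b) ∧ A.card = r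

/-- Claw-free graphs satisfy α(G) ≤ 2γ(G). -/
theorem stmt0 [Fintype V] (G : SimpleGraph V) (hG : K1rFree G 3) :
    indepNum G ≤ 2 * domNum G := by
  classical
  have hne : {n | ∃ D : Finset V, IsDomFinset G D ∧ D.card = n}.Nonempty :=
    ⟨(Finset.univ : Finset V).card, Finset.univ,
      fun v hv => absurd (Finset.mem_univ v) hv, rfl⟩
  obtain ⟨D, hD, hDcard⟩ := Nat.sInf_mem hne
  rw [domNum, ← hDcard]
  refine csSup_le ⟨0, ∅, fun u hu => absurd hu (Finset.notMem_empty u), rfl⟩ ?_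
  rintro n ⟨S, hS, rfl⟩
  -- define the map sending each vertex of S to a dominator in D
  set f : V → V := fun s => if h : s ∈ D then s else (hD s h).choose with hf
  have hfD : ∀ s, f s ∈ D := by
    intro s
    by_cases h : s ∈ D
    · simpa [hf, h]
    · simpa [hf, h] using (hD s h).choose_spec.1
  have hfAdj : ∀ s, s ∉ D → G.Adj (f s) s := by
    intro s h
    simpa [hf, h] using (hD s h).choose_spec.2
  have hmaps : ∀ s ∈ S, f s ∈ D := fun s _ => hfD s
  rw [Finset.card_eq_sum_card_fiberwise hmaps]
  calc ∑ d ∈ D, (S.filter fun s => f s = d).card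
      ≤ ∑ _d ∈ D, 2 := by
        refine Finset.sum_le_sum ?_
        intro d hd
        by_contra hcard
        push_neg at hcard
        -- 3 ≤ fiber card
        obtain ⟨A, hAsub, hAcard⟩ := Finset.exists_subset_card_eq hcard
        -- every element of the fiber is adjacent to d
        have hadj : ∀ s ∈ A, G.Adj d s := by
          intro s hsA
          have hsfib := hAsub hsA
          rw [Finset.mem_filter] at hsfib
          obtain ⟨hsS, hsf⟩ := hsfib
          by_cases h : s ∈ D
          · -- then f s = s = d, so d ∈ S and s = d
            have : s = d := by simpa [hf, h] using hsf
            subst this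
            -- but then the fiber is contained in {s}: any other elt t adjacent to s in S
            exfalso
            have h3 : 3 ≤ A.card := hAcard.ge
            obtain ⟨t, htA, hts⟩ : ∃ t ∈ A, t ≠ s := by
              by_contra hall
              push_neg at hall
              have : A ⊆ {s} := fun x hx => Finset.mem_singleton.mpr (hall x hx)
              have := Finset.card_le_card this
              simp [hAcard] at this
            have htfib := hAsub htA
            rw [Finset.mem_filter] at htfib
            obtain ⟨htS, htf⟩ := htfib
            by_cases ht : t ∈ D
            · exact hts (by simpa [hf, ht] using htf)
            · have : G.Adj (f t) t := hfAdj t ht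
              rw [htf] at this
              exact hS s hsS t htS this
          · have := hfAdj s h
            rwa [hsf] at this
        exact hG ⟨d, A, hadj,
          fun a ha b hb _ => hS a (Finset.mem_filter.mp (hAsub ha)).1
            b (Finset.mem_filter.mp (hAsub hb)).1, hAcard⟩
    _ = 2 * D.card := by rw [Finset.sum_const, smul_eq_mul, mul_comm]
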